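/- The zeta map sends Dyck paths to Dyck paths: for any Dyck path D of length n, the lattice path ζ(D) obtained by reading the labels of D along lines of slope 1 stays weakly above the diagonal. -/

import Mathlib

/-- Each step of a path (`true` = up, `false` = right) together with the height
`y − x` of the line of slope 1 containing its label. -/
def labelHeights : List Bool → ℤ → List (Bool × ℤ)
  | [], _ => []
  | b :: rest, h =>
    let h' := if b then h + 1 else h - 1
    (b, h') :: labelHeights rest h'

/-- Haglund's zeta map: read the labels along the lines `y = x + t` for
`t = 0, 1, 2, …`, turning the label of a right step into an up step and
the label of an up step into a right step. -/
def zeta (D : List Bool) : List Bool :=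
  (List.range (D.length + 1)).flatMap fun t =>
    ((labelHeights D 0).filter (fun p => p.2 = (t : ℤ))).map fun p => !p.1

/-- A Dyck path: a lattice path from `(0,0)` to `(n,n)` (`true` = up, `false` = right)
staying weakly above the diagonal. -/
def IsDyck (D : List Bool) : Prop :=
  D.count true = D.count false ∧
  ∀ k, (D.take k).count false ≤ (D.take k).count true

namespace ZetaAux

open List

/-- signed weight of a path: `#up - #right`. -/
def wt (l : List Bool) : ℤ := (l.count true : ℤ) - l.count false

lemma wt_nil : wt [] = 0 := by simp [wt]

lemma wt_cons (b : Bool) (l : List Bool) :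
    wt (b :: l) = (if b then 1 else -1) + wt l := by
  cases b <;> simp [wt, List.count_cons] <;> ring

lemma wt_append (l₁ l₂ : List Bool) : wt (l₁ ++ l₂) = wt l₁ + wt l₂ := by
  simp [wt, List.count_append]; ring

lemma wt_take_ge (l : List Bool) (k : ℕ) : -(l.count false : ℤ) ≤ wt (l.take k) := by
  have h1 : (l.take k).count false ≤ l.count false := (l.take_sublist k).count_le _
  have h2 : (0:ℤ) ≤ ((l.take k).count true : ℤ) := by positivity
  simp only [wt]
  omega

lemma wt_take_eq (l : List Bool) (k : ℕ) (hk : l.length ≤ k) : wt (l.take k) = wt l := by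
  rw [List.take_of_length_le hk]

/-- The crossing identity (telescoping of the level-`t` indicator). -/
lemma crossing : ∀ (D : List Bool) (h t : ℤ),
    ((labelHeights D h).countP (fun p => p.1 && decide (p.2 = t)) : ℤ)
      - ((labelHeights D h).countP (fun p => !p.1 && decide (p.2 = t - 1)))
    = (if t ≤ h + wt D then 1 else 0) - (if t ≤ h then 1 else 0) := by
  intro D
  induction D with
  | nil => intro h t; simp [labelHeights, wt_nil]
  | cons b rest ih =>
    intro h t
    cases b
    · have ih' := ih (h - 1) t
      simp only [labelHeights, List.countP_cons, wt_cons, Bool.not_false, Bool.false_and,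
        Bool.true_and, decide_eq_true_eq, if_false] at *
      push_cast at *
      split_ifs at ih' ⊢ <;> omega
    · have ih' := ih (h + 1) t
      simp only [labelHeights, List.countP_cons, wt_cons, Bool.not_true, Bool.false_and,
        Bool.true_and, decide_eq_true_eq, if_true] at *
      push_cast at *
      split_ifs at ih' ⊢ <;> omega

lemma heights_bound : ∀ (D : List Bool) (h : ℤ),
    (∀ k, 0 ≤ h + wt (D.take k)) →
    ∀ p ∈ labelHeights D h, 0 ≤ p.2 ∧ (p.1 = true → 1 ≤ p.2) ∧ p.2 ≤ h + D.length := by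
  intro D
  induction D with
  | nil => intro h _ p hp; simp [labelHeights] at hp
  | cons b rest ih =>
    intro h hyp p hp
    have h0 : 0 ≤ h := by simpa [wt_nil] using hyp 0
    cases b with
    | false =>
      have h1 : 0 ≤ h - 1 := by
        have := hyp 1
        simp [wt_cons, wt_nil] at this
        omega
      have hrest : ∀ k, 0 ≤ (h - 1) + wt (rest.take k) := by
        intro k
        have := hyp (k + 1)
        simp only [List.take_succ_cons, wt_cons, if_neg (by simp : ¬ (false = true))] at this
        omega
      simp [labelHeights] at hp
      rcases hp with rfl | hp
      · refine ⟨by omega, by simp, ?_⟩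
        simp only [List.length_cons]
        push_cast
        omega
      · obtain ⟨a1, a2, a3⟩ := ih (h - 1) hrest p hp
        refine ⟨a1, a2, ?_⟩
        simp only [List.length_cons]
        push_cast at a3 ⊢
        omega
    | true =>
      have hrest : ∀ k, 0 ≤ (h + 1) + wt (rest.take k) := by
        intro k
        have := hyp (k + 1)
        simp only [List.take_succ_cons, wt_cons, if_pos rfl] at this
        omega
      simp [labelHeights] at hp
      rcases hp with rfl | hp
      · refine ⟨by omega, by intro _; omega, ?_⟩
        simp only [List.length_cons]
        push_cast
        omega
      · obtain ⟨a1, a2, a3⟩ := ih (h + 1) hrest p hp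
        refine ⟨a1, a2, ?_⟩
        simp only [List.length_cons]
        push_cast at a3 ⊢
        omega

lemma countP_sum_range (L : List (Bool × ℤ)) (q : Bool → Bool) (m : ℕ)
    (hb : ∀ p ∈ L, q p.1 = true → 0 ≤ p.2 ∧ p.2 < (m : ℤ)) :
    ∑ t ∈ Finset.range m, L.countP (fun p => q p.1 && decide (p.2 = (t : ℤ)))
      = L.countP (fun p => q p.1) := by
  induction L with
  | nil => simp
  | cons a L ihL =>
    simp only [List.countP_cons]
    rw [Finset.sum_add_distrib, ihL (fun p hp => hb p (List.mem_cons_of_mem a hp))]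
    congr 1
    by_cases hq : q a.1 = true
    · obtain ⟨hb1, hb2⟩ := hb a List.mem_cons_self hq
      have hmem : a.2.toNat ∈ Finset.range m := by
        simp only [Finset.mem_range]; omega
      rw [Finset.sum_congr rfl (fun t _ => ?_), Finset.sum_ite_eq' (Finset.range m) a.2.toNat
        (fun _ => 1), if_pos hmem, hq]
      · simp
      · simp only [hq, Bool.true_and, decide_eq_true_eq]
        have hiff : (a.2 = (t : ℤ)) ↔ (t = a.2.toNat) := by omega
        simp [hiff]
    · simp only [Bool.not_eq_true] at hq
      simp only [hq, Bool.false_and, Bool.false_eq_true, if_false, Finset.sum_const_zero]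

lemma take_flatten : ∀ (Bs : List (List Bool)) (c : ℤ),
    (∀ i k, 0 ≤ c + wt ((Bs.take i).flatten) + wt ((Bs.getD i []).take k)) →
    ∀ k, 0 ≤ c + wt ((Bs.flatten).take k) := by
  intro Bs
  induction Bs with
  | nil => intro c hyp k; simpa [wt_nil] using hyp 0 0
  | cons B Bs ih =>
    intro c hyp k
    rw [List.flatten_cons, List.take_append, wt_append]
    by_cases hk : k ≤ B.length
    · have : k - B.length = 0 := by omega
      rw [this]
      simpa [wt_nil] using hyp 0 k
    · rw [wt_take_eq B k (by omega)]
      have hrec : ∀ i k', 0 ≤ (c + wt B) + wt ((Bs.take i).flatten)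
          + wt ((Bs.getD i []).take k') := by
        intro i k'
        have := hyp (i + 1) k'
        simp only [List.take_succ_cons, List.flatten_cons, wt_append, List.getD_cons_succ] at this
        omega
      have := ih (c + wt B) hrec (k - B.length)
      omega

end ZetaAux

open List ZetaAux in
/-- The zeta map sends Dyck paths to Dyck paths. -/
theorem zeta_isDyck (D : List Bool) (h : IsDyck D) : IsDyck (zeta D) := by
  obtain ⟨htot, hpre⟩ := h
  set n := D.length with hn
  -- weight facts about D
  have hwD : wt D = 0 := by simp [wt, htot]
  have hpreZ : ∀ k, 0 ≤ (0:ℤ) + wt (D.take k) := by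
    intro k
    have := hpre k
    simp only [wt, zero_add]
    omega
  -- bounds on label heights
  have hbound := heights_bound D 0 hpreZ
  set L := labelHeights D 0 with hL
  -- counting functions
  have hcross0 := crossing D 0
  rw [hwD, ← hL] at hcross0
  set cT : ℤ → ℕ := fun t => L.countP (fun p => p.1 && decide (p.2 = t)) with hcT
  set cF : ℤ → ℕ := fun t => L.countP (fun p => !p.1 && decide (p.2 = t)) with hcF
  -- crossing identity: cT t = cF (t-1)
  have hcross : ∀ t : ℤ, (cT t : ℤ) = cF (t - 1) := by
    intro t
    show ((L.countP (fun p => p.1 && decide (p.2 = t)) : ℕ) : ℤ)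
        = ((L.countP (fun p => !p.1 && decide (p.2 = t - 1)) : ℕ) : ℤ)
    have := hcross0 t
    simp only [add_zero, sub_self] at this
    omega
  -- blocks
  set block : ℕ → List Bool :=
    fun t => (L.filter (fun p => decide (p.2 = (t : ℤ)))).map (fun p => !p.1) with hblock
  have hzeta : zeta D = ((List.range (n + 1)).map block).flatten := by
    rw [zeta, List.flatMap]
    simp [hblock, hL, hn, Function.comp_def, ← List.map_eq_flatMap]
  -- counts within a block
  have hct : ∀ t : ℕ, (block t).count true = cF t := by
    intro t
    simp only [hblock, hcF, List.count, List.countP_map, List.countP_filter]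
    apply List.countP_congr
    rintro ⟨b, x⟩ _
    cases b <;> simp
  have hcf : ∀ t : ℕ, (block t).count false = cT t := by
    intro t
    simp only [hblock, hcT, List.count, List.countP_map, List.countP_filter]
    apply List.countP_congr
    rintro ⟨b, x⟩ _
    cases b <;> simp
  have hwblock : ∀ t : ℕ, wt (block t) = (cT (((t + 1 : ℕ) : ℤ)) : ℤ) - cT t := by
    intro t
    rw [wt, hct, hcf, hcross (((t + 1 : ℕ) : ℤ))]
    norm_num
  -- vanishing at the ends
  have hcT0 : cT 0 = 0 := by
    rw [hcT, List.countP_eq_zero]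
    intro p hp
    obtain ⟨_, h2, _⟩ := hbound p hp
    simp only [Bool.and_eq_true, decide_eq_true_eq, not_and]
    intro hb hval
    have := h2 hb
    omega
  have hcTbig : ∀ t : ℤ, (n : ℤ) < t → cT t = 0 := by
    intro t ht
    rw [hcT, List.countP_eq_zero]
    intro p hp
    obtain ⟨_, _, h3⟩ := hbound p hp
    simp only [zero_add] at h3
    simp only [Bool.and_eq_true, decide_eq_true_eq, not_and]
    intro _ hval
    omega
  -- partial sums of block weights telescope
  have hS : ∀ m : ℕ, wt (((List.range m).map block).flatten) = (cT m : ℤ) := by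
    intro m
    have e : wt (((List.range m).map block).flatten)
        = ∑ t ∈ Finset.range m, wt (block t) := by
      induction m with
      | zero => simp [wt_nil]
      | succ m ihm =>
        rw [List.range_succ, List.map_append, List.flatten_append, wt_append, ihm,
          Finset.sum_range_succ]
        simp [wt_nil]
    rw [e, Finset.sum_congr rfl (fun t _ => hwblock t),
      Finset.sum_range_sub (fun t : ℕ => (cT t : ℤ)) m]
    simp [hcT0]
  -- counts of true/false labels
  have hfst : ∀ (D' : List Bool) (h' : ℤ), (labelHeights D' h').map Prod.fst = D' := by
    intro D'
    induction D' with
    | nil => intro h'; simp [labelHeights]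
    | cons b rest ihD => intro h'; simp [labelHeights, ihD]
  have hcount : ∀ q : Bool, L.countP (fun p => p.1 == q) = D.count q := by
    intro q
    conv_rhs => rw [← hfst D 0, ← hL]
    rw [List.count, List.countP_map]
    rfl
  constructor
  · -- total counts agree
    have hT : (zeta D).count true = L.countP (fun p => !p.1) := by
      rw [hzeta, List.count, List.countP_flatten, List.map_map]
      have e : ∀ t ∈ List.range (n+1),
          ((List.countP (fun a => a == true)) ∘ block) t
            = L.countP (fun p => (!p.1) && decide (p.2 = (t:ℤ))) := by
        intro t _
        simp only [Function.comp, hblock, List.countP_map, List.countP_filter]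
        apply List.countP_congr
        rintro ⟨b, x⟩ _
        cases b <;> simp
      rw [List.map_congr_left e]
      refine countP_sum_range L (fun b => !b) (n + 1) (fun p hp _ => ?_)
      obtain ⟨h1, _, h3⟩ := hbound p hp
      simp only [zero_add] at h3
      exact ⟨h1, by push_cast; omega⟩
    have hF : (zeta D).count false = L.countP (fun p => p.1) := by
      rw [hzeta, List.count, List.countP_flatten, List.map_map]
      have e : ∀ t ∈ List.range (n+1),
          ((List.countP (fun a => a == false)) ∘ block) t
            = L.countP (fun p => p.1 && decide (p.2 = (t:ℤ))) := by
        intro t _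
        simp only [Function.comp, hblock, List.countP_map, List.countP_filter]
        apply List.countP_congr
        rintro ⟨b, x⟩ _
        cases b <;> simp
      rw [List.map_congr_left e]
      refine countP_sum_range L (fun b => b) (n + 1) (fun p hp _ => ?_)
      obtain ⟨h1, _, h3⟩ := hbound p hp
      simp only [zero_add] at h3
      exact ⟨h1, by push_cast; omega⟩
    have e1 : L.countP (fun p => !p.1) = L.countP (fun p => p.1 == false) := by
      apply List.countP_congr; rintro ⟨b, x⟩ _; cases b <;> simp
    have e2 : L.countP (fun p => p.1) = L.countP (fun p => p.1 == true) := by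
      apply List.countP_congr; rintro ⟨b, x⟩ _; cases b <;> simp
    rw [hT, hF, e1, e2, hcount, hcount, htot]
  · -- prefix condition
    intro k
    have key : 0 ≤ (0:ℤ) + wt (((((List.range (n + 1)).map block)).flatten).take k) := by
      apply take_flatten
      intro i k'
      rw [← List.map_take, List.take_range]
      by_cases hi : i < n + 1
      · have hmin : min i (n + 1) = i := by omega
        have hgd : ((List.range (n + 1)).map block).getD i [] = block i := by
          rw [List.getD_eq_getElem _ _ (by simpa using hi)]
          simp
        rw [hmin, hgd, hS i]
        have hge := wt_take_ge (block i) k'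
        rw [hcf i] at hge
        omega
      · have hmin : min i (n + 1) = n + 1 := by omega
        have hgd : ((List.range (n + 1)).map block).getD i [] = [] := by
          apply List.getD_eq_default
          simpa using (by omega : n + 1 ≤ i)
        rw [hmin, hgd, hS (n + 1)]
        have : cT ((n + 1 : ℕ) : ℤ) = 0 := hcTbig _ (by push_cast; omega)
        simp only [List.take_nil, wt_nil]
        omega
    rw [← hzeta] at key
    simp only [wt, zero_add] at key
    omega
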